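/- The L1-sensitivity of the aggregation error AE is 2(1 - 1/n): if B' is obtained from B = (x_1,...,x_n) by incrementing exactly one entry x_j by 1, then |AE(B') - AE(B)| ≤ 2(1 - 1/n), and this bound is tight (attained for some B). -/
import Mathlib

noncomputable def AE (n : ℕ) (x : Fin n → ℝ) : ℝ :=
  ∑ i, |x i - (∑ j, x j) / n|

lemma sum_update (n : ℕ) (x : Fin n → ℝ) (j : Fin n) :
    ∑ i, Function.update x j (x j + 1) i = (∑ i, x i) + 1 := by
  rw [Finset.sum_update_of_mem (Finset.mem_univ j)]
  rw [Finset.sum_eq_sum_sdiff_singleton_add (Finset.mem_univ j) x]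
  ring

theorem stmt_1 (n : ℕ) (hn : 0 < n) :
    (∀ (x : Fin n → ℝ) (j : Fin n),
      |AE n (Function.update x j (x j + 1)) - AE n x| ≤ 2 * (1 - 1 / (n : ℝ))) ∧
    (∃ (x : Fin n → ℝ) (j : Fin n),
      |AE n (Function.update x j (x j + 1)) - AE n x| = 2 * (1 - 1 / (n : ℝ))) := by
  have hnpos : (0:ℝ) < n := by exact_mod_cast hn
  have hn1 : (1:ℝ) ≤ n := by exact_mod_cast hn
  have hinv : (1:ℝ)/n ≤ 1 := by rw [div_le_one hnpos]; exact hn1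
  constructor
  · intro x j
    have key : AE n (Function.update x j (x j + 1)) - AE n x =
        ∑ i, (|Function.update x j (x j + 1) i - ((∑ k, x k) / n + 1/n)| - |x i - (∑ k, x k)/n|) := by
      unfold AE
      rw [sum_update, Finset.sum_sub_distrib, add_div]
    rw [key]
    have hle : ∀ i ∈ Finset.univ \ ({j} : Finset (Fin n)),
        |Function.update x j (x j + 1) i - ((∑ k, x k) / n + 1/n)| - |x i - (∑ k, x k)/n| ≤ 1/n := by
      intro i hi
      rw [Finset.mem_sdiff, Finset.mem_singleton] at hi
      rw [Function.update_of_ne hi.2]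
      calc |x i - ((∑ k, x k) / n + 1/n)| - |x i - (∑ k, x k)/n|
          ≤ |(x i - ((∑ k, x k) / n + 1/n)) - (x i - (∑ k, x k)/n)| := abs_sub_abs_le_abs_sub _ _
        _ = 1/n := by rw [show (x i - ((∑ k, x k) / n + 1/n)) - (x i - (∑ k, x k)/n) = -(1/n) by ring, abs_neg, abs_of_pos (by positivity)]
    calc |∑ i, (|Function.update x j (x j + 1) i - ((∑ k, x k) / n + 1/n)| - |x i - (∑ k, x k)/n|)|
        ≤ ∑ i, |(|Function.update x j (x j + 1) i - ((∑ k, x k) / n + 1/n)| - |x i - (∑ k, x k)/n|)| :=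
          Finset.abs_sum_le_sum_abs _ _
      _ = |(|Function.update x j (x j + 1) j - ((∑ k, x k) / n + 1/n)| - |x j - (∑ k, x k)/n|)|
          + ∑ i ∈ Finset.univ \ {j}, |(|Function.update x j (x j + 1) i - ((∑ k, x k) / n + 1/n)| - |x i - (∑ k, x k)/n|)| :=
          Finset.sum_eq_add_sum_sdiff_singleton_of_mem (Finset.mem_univ j) _
      _ ≤ (1 - 1/n) + ((n:ℝ) - 1) * (1/n) := by
          gcongr ?_ + ?_
          · rw [Function.update_self]
            calc |(|x j + 1 - ((∑ k, x k) / n + 1/n)| - |x j - (∑ k, x k)/n|)|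
                ≤ |(x j + 1 - ((∑ k, x k) / n + 1/n)) - (x j - (∑ k, x k)/n)| :=
                  abs_abs_sub_abs_le_abs_sub _ _
              _ = 1 - 1/n := by
                  rw [show (x j + 1 - ((∑ k, x k) / n + 1/n)) - (x j - (∑ k, x k)/n) = 1 - 1/n by ring]
                  exact abs_of_nonneg (by linarith)
          · calc ∑ i ∈ Finset.univ \ {j}, |(|Function.update x j (x j + 1) i - ((∑ k, x k) / n + 1/n)| - |x i - (∑ k, x k)/n|)|
                ≤ ∑ _i ∈ Finset.univ \ {j}, 1/(n:ℝ) := by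
                  apply Finset.sum_le_sum
                  intro i hi
                  rw [Finset.mem_sdiff, Finset.mem_singleton] at hi
                  rw [Function.update_of_ne hi.2]
                  calc |(|x i - ((∑ k, x k) / n + 1/n)| - |x i - (∑ k, x k)/n|)|
                      ≤ |(x i - ((∑ k, x k) / n + 1/n)) - (x i - (∑ k, x k)/n)| :=
                        abs_abs_sub_abs_le_abs_sub _ _
                    _ = 1/n := by
                        rw [show (x i - ((∑ k, x k) / n + 1/n)) - (x i - (∑ k, x k)/n) = -(1/n) by ring, abs_neg]
                        exact abs_of_nonneg (by positivity)
              _ = ((n:ℝ) - 1) * (1/n) := by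
                  rw [Finset.sum_const, Finset.card_sdiff_of_subset (Finset.subset_univ _),
                    Finset.card_singleton, Finset.card_univ, Fintype.card_fin, nsmul_eq_mul]
                  push_cast [Nat.cast_sub hn]
                  ring
      _ = 2 * (1 - 1/(n:ℝ)) := by field_simp; ring
  · refine ⟨fun _ => 0, ⟨0, hn⟩, ?_⟩
    have h0 : AE n (fun _ => 0) = 0 := by simp [AE]
    have h1 : AE n (Function.update (fun _ => (0:ℝ)) ⟨0, hn⟩ ((0:ℝ) + 1)) = 2 * (1 - 1/(n:ℝ)) := by
      unfold AE
      rw [sum_update]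
      simp only [Finset.sum_const_zero, zero_add]
      rw [Finset.sum_eq_add_sum_sdiff_singleton_of_mem (Finset.mem_univ (⟨0, hn⟩ : Fin n)) _]
      rw [Function.update_self]
      have hrest : ∀ i ∈ Finset.univ \ ({(⟨0, hn⟩ : Fin n)} : Finset (Fin n)),
          |Function.update (fun _ => (0:ℝ)) ⟨0, hn⟩ ((0:ℝ) + 1) i - 1 / n| = 1/(n:ℝ) := by
        intro i hi
        rw [Finset.mem_sdiff, Finset.mem_singleton] at hi
        rw [Function.update_of_ne hi.2]
        rw [show ((fun _ => (0:ℝ)) i) - 1/(n:ℝ) = -(1/n) by ring, abs_neg]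
        exact abs_of_nonneg (by positivity)
      simp only [zero_add] at hrest ⊢
      rw [Finset.sum_congr rfl hrest, Finset.sum_const,
        Finset.card_sdiff_of_subset (Finset.subset_univ _),
        Finset.card_singleton, Finset.card_univ, Fintype.card_fin, nsmul_eq_mul,
        Nat.cast_sub hn]
      rw [abs_of_nonneg (by linarith)]
      push_cast
      field_simp
      ring
    rw [h0, h1, sub_zero]
    exact abs_of_nonneg (by nlinarith)
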